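/- Let G be a directed Eulerian graph without parallel edges or self-loops, and suppose node v with d(v) = 2 is a cut node of U(G) with U(G) \ v having components K1 and K2, and (u,v,w) appears in some Eulerian circuit of G. Then u and w lie in different components of U(G) \ v. -/

import Mathlib

/-- The underlying undirected simple graph of a directed graph `E` (no self-loops). -/
def underlyingUG {V : Type*} (E : V → V → Prop) : SimpleGraph V where
  Adj a b := a ≠ b ∧ (E a b ∨ E b a)
  symm := ⟨fun a b h => ⟨h.1.symm, h.2.symm⟩⟩
  loopless := ⟨fun a h => h.1 rfl⟩

/-- Out-degree of `v`: number of out-neighbors. -/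
noncomputable def outdeg {V : Type*} (E : V → V → Prop) (v : V) : ℕ := Set.ncard {w | E v w}

/-- In-degree of `v`: number of in-neighbors. -/
noncomputable def indeg {V : Type*} (E : V → V → Prop) (v : V) : ℕ := Set.ncard {u | E u v}

/-- The cyclic sequence of consecutive pairs of a circuit given as a vertex list. -/
def cyclicPairs {V : Type*} (c : List V) : List (V × V) := c.zip (c.rotate 1)

/-- `c` is an Eulerian circuit: a nonempty closed walk using every edge exactly once. -/
def IsEulerianCircuit {V : Type*} (E : V → V → Prop) (c : List V) : Prop :=
  c ≠ [] ∧ (cyclicPairs c).Nodup ∧ ∀ p : V × V, p ∈ cyclicPairs c ↔ E p.1 p.2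

/-- The walk `q` appears (cyclically, as consecutive edges) in the circuit `c`. -/
def Appears {V : Type*} (q c : List V) : Prop :=
  ∃ k, (q.zip q.tail) <:+: cyclicPairs (c.rotate k)

/-- `v` is a cut node of the connected undirected graph `H`. -/
def IsCutNode {V : Type*} (H : SimpleGraph V) (v : V) : Prop :=
  ¬ (H.induce {u | u ≠ v}).Connected

/-- The underlying undirected graph with node `v` (and incident edges) removed. -/
def delNode {V : Type*} (E : V → V → Prop) (v : V) := (underlyingUG E).induce {u | u ≠ v}

lemma length_cyclicPairs {V : Type*} (l : List V) : (cyclicPairs l).length = l.length := by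
  simp [cyclicPairs]

lemma cyclicPairs_rotate {V : Type*} (l : List V) (k : ℕ) :
    cyclicPairs (l.rotate k) = (cyclicPairs l).rotate k := by
  apply List.ext_getElem
  · simp [cyclicPairs]
  intro i h1 h2
  have hidx : (i + (k + 1)) % l.length = ((i + k) % l.length + 1) % l.length := by
    rw [Nat.mod_add_mod]; ring_nf
  simp only [cyclicPairs, List.getElem_rotate, List.getElem_zip, List.rotate_rotate,
    List.length_rotate, List.length_zip, List.length_rotate, min_self, hidx]

lemma euler_rotate {V : Type*} {E : V → V → Prop} {d : List V}
    (hc : IsEulerianCircuit E d) (k : ℕ) : IsEulerianCircuit E (d.rotate k) := by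
  obtain ⟨hne, hnd, hmem⟩ := hc
  refine ⟨by simpa using hne, ?_, ?_⟩
  · rw [cyclicPairs_rotate]; exact List.nodup_rotate.mpr hnd
  · intro p; rw [cyclicPairs_rotate, List.mem_rotate]; exact hmem p

lemma chain'_of_circuit {V : Type*} {E : V → V → Prop} {d : List V}
    (hc : IsEulerianCircuit E d) : List.Chain' E d := by
  obtain ⟨hne, hnd, hmem⟩ := hc
  rw [show List.Chain' E d = List.IsChain E d from rfl, List.isChain_iff_getElem]
  intro i h
  have hi : i < (cyclicPairs d).length := by rw [length_cyclicPairs]; omega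
  have hmm := List.getElem_mem hi
  have hval : (cyclicPairs d)[i] = (d[i]'(by omega), d[i+1]'(by omega)) := by
    simp only [cyclicPairs, List.getElem_zip, List.getElem_rotate]
    congr 2
    exact Nat.mod_eq_of_lt (by omega)
  rw [hval] at hmm
  simpa using (hmem _).mp hmm

lemma mem_of_edge {V : Type*} {E : V → V → Prop} {d : List V}
    (hc : IsEulerianCircuit E d) {x y : V} (h : E x y) : x ∈ d ∧ y ∈ d := by
  obtain ⟨hne, hnd, hmem⟩ := hc
  have hp : (x,y) ∈ cyclicPairs d := (hmem (x,y)).mpr h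
  simp only [cyclicPairs] at hp
  constructor
  · have := List.mem_map_of_mem (f := Prod.fst) hp
    rwa [List.map_fst_zip (by simp)] at this
  · have := List.mem_map_of_mem (f := Prod.snd) hp
    rw [List.map_snd_zip (by simp)] at this
    exact List.mem_rotate.mp this

lemma count_fst {V : Type*} [DecidableEq V] {E : V → V → Prop} {d : List V}
    (hc : IsEulerianCircuit E d) (v : V) : d.count v = Set.ncard {x | E v x} := by
  obtain ⟨hne, hnd, hmem⟩ := hc
  have hfst : List.map Prod.fst (cyclicPairs d) = d := List.map_fst_zip (by simp)
  set P := cyclicPairs d with hP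
  set F := P.filter (fun p => p.1 == v) with hF
  have h1 : d.count v = F.length := by
    rw [← hfst, List.count_eq_countP, List.countP_map, hF,
      List.countP_eq_length_filter]
    rfl
  have hFnd : F.Nodup := hnd.filter _
  have h2 : (F.map Prod.snd).Nodup := by
    refine hFnd.map_on ?_
    intro x hx y hy hxy
    have hx1 : x.1 = v := by simpa using (List.mem_filter.mp hx).2
    have hy1 : y.1 = v := by simpa using (List.mem_filter.mp hy).2
    exact Prod.ext (hx1.trans hy1.symm) hxy
  have h3 : ∀ x, x ∈ F.map Prod.snd ↔ E v x := by
    intro x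
    simp only [hF, List.mem_map, List.mem_filter, beq_iff_eq]
    constructor
    · rintro ⟨p, ⟨hpP, hp1⟩, rfl⟩
      have := (hmem p).mp hpP
      rwa [hp1] at this
    · intro hE
      exact ⟨(v, x), ⟨(hmem (v,x)).mpr hE, rfl⟩, rfl⟩
  have h4 : {x | E v x} = ((F.map Prod.snd).toFinset : Set V) := by
    ext x; simp [← h3]
  rw [h4, Set.ncard_coe_finset, List.toFinset_card_of_nodup h2, List.length_map, h1]

lemma chain_reach {V : Type*} {E : V → V → Prop} (hloop : ∀ x : V, ¬ E x x) (v : V) :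
    ∀ (ℓ : List V) (a : V), List.Chain' E (a :: ℓ) → ∀ (ha : a ≠ v), v ∉ ℓ →
    ∀ x ∈ ℓ, ∀ (hx : x ≠ v), (delNode E v).Reachable ⟨a, ha⟩ ⟨x, hx⟩ := by
  intro ℓ
  induction ℓ with
  | nil => intro a _ _ _ x hx; simp at hx
  | cons b t ih =>
    intro a hch ha hv x hxmem hx
    have hb : b ≠ v := fun h => hv (h ▸ List.mem_cons_self)
    have hE : E a b := (List.isChain_cons_cons.mp hch).1
    have hab : a ≠ b := fun h => hloop a (h ▸ hE)
    have hr : (delNode E v).Reachable ⟨a, ha⟩ ⟨b, hb⟩ :=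
      SimpleGraph.Adj.reachable (⟨hab, Or.inl hE⟩ : a ≠ b ∧ (E a b ∨ E b a))
    rcases List.mem_cons.mp hxmem with rfl | hx'
    · exact hr
    · exact hr.trans (ih b (List.isChain_cons_cons.mp hch).2 hb
        (fun h => hv (List.mem_cons_of_mem b h)) x hx' hx)

lemma getLast_congr {α : Type*} {l₁ l₂ : List α} (h₁ : l₁ ≠ []) (h₂ : l₂ ≠ [])
    (h : l₁ = l₂) : l₁.getLast h₁ = l₂.getLast h₂ := by subst h; rfl

lemma getLast_append_of_ne {α : Type*} (p l : List α) (h : l ≠ []) :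
    (p ++ l).getLast (by simp [h]) = l.getLast h := by
  rw [List.getLast_append]
  simp [h]

/-- If `d(v) = 2`, `v` is a cut node of `U(G)`, and `(u,v,w)` appears in some Eulerian
circuit, then `u` and `w` lie in different connected components of `U(G) \ v`. -/
theorem safe_walk_crosses_components {V : Type*} [Fintype V] (E : V → V → Prop)
    (hloop : ∀ x : V, ¬ E x x) (hconn : (underlyingUG E).Connected)
    (v u w : V) (hdout : outdeg E v = 2) (hdin : indeg E v = 2)
    (hcut : IsCutNode (underlyingUG E) v)
    (huv : E u v) (hvw : E v w) (hu : u ≠ v) (hw : w ≠ v)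
    (happ : ∃ c : List V, IsEulerianCircuit E c ∧ Appears [u, v, w] c) :
    (delNode E v).connectedComponentMk ⟨u, hu⟩ ≠
      (delNode E v).connectedComponentMk ⟨w, hw⟩ := by
  classical
  intro heq
  have hr_uw : (delNode E v).Reachable ⟨u, hu⟩ ⟨w, hw⟩ :=
    SimpleGraph.ConnectedComponent.eq.mp heq
  obtain ⟨c, hc, k0, hinf⟩ := happ
  have hinf' : [(u,v),(v,w)] <:+: cyclicPairs (c.rotate k0) := hinf
  obtain ⟨s, t, hst⟩ := hinf'
  obtain ⟨d, hcd, hPd⟩ : ∃ d, IsEulerianCircuit E d ∧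
      cyclicPairs d = ((v,w) :: t) ++ (s ++ [(u,v)]) := by
    refine ⟨(c.rotate k0).rotate (s.length + 1),
      euler_rotate (euler_rotate hc k0) (s.length + 1), ?_⟩
    rw [cyclicPairs_rotate, ← hst]
    have hre : s ++ [(u,v),(v,w)] ++ t = s ++ ((u,v) :: (v,w) :: t) := by simp
    rw [hre, List.rotate_eq_drop_append_take
      (by simp only [List.length_append, List.length_cons]; omega)]
    have hdrop : List.drop (s.length + 1) (s ++ (u, v) :: (v, w) :: t) = (v, w) :: t := by
      rw [List.drop_append]
      simp
    have htake : List.take (s.length + 1) (s ++ (u, v) :: (v, w) :: t) = s ++ [(u, v)] := by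
      rw [List.take_append]
      simp
    rw [hdrop, htake]
  have hn : d.length = t.length + s.length + 2 := by
    rw [← length_cyclicPairs, hPd]; simp; omega
  have hPi : ∀ i (h : i < d.length),
      (cyclicPairs d)[i]'(by rw [length_cyclicPairs]; exact h) =
        (d[i]'h, d[(i+1) % d.length]'(Nat.mod_lt _ (by omega))) := by
    intro i h
    simp only [cyclicPairs, List.getElem_zip, List.getElem_rotate]
  have hP0 : (cyclicPairs d)[0]'(by rw [length_cyclicPairs]; omega) = (v, w) := by
    simp only [hPd]
    rfl
  have hd0 : d[0]'(by omega) = v ∧ d[1]'(by omega) = w := by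
    have := hPi 0 (by omega)
    rw [hP0] at this
    have h1 : (0 + 1) % d.length = 1 := Nat.mod_eq_of_lt (by omega)
    simp only [h1] at this
    exact ⟨(Prod.mk.injEq _ _ _ _).mp this.symm |>.1,
      (Prod.mk.injEq _ _ _ _).mp this.symm |>.2⟩
  have hdne : d ≠ [] := hcd.1
  have hPlast : (cyclicPairs d).getLast (by simp [hPd]) = (u, v) := by
    have heq2 : cyclicPairs d = (((v,w) :: t) ++ s) ++ [(u,v)] := by rw [hPd]; simp
    rw [getLast_congr (by simp [hPd]) (by simp) heq2,
      getLast_append_of_ne _ _ (by simp)]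
    rfl
  have hdlast : d[d.length - 1]'(by omega) = u := by
    rw [List.getLast_eq_getElem] at hPlast
    have hlen : (cyclicPairs d).length = d.length := length_cyclicPairs d
    simp only [hlen] at hPlast
    have := hPi (d.length - 1) (by omega)
    rw [hPlast] at this
    exact ((Prod.mk.injEq _ _ _ _).mp this.symm).1
  -- decompose d
  rcases d with _ | ⟨a, _ | ⟨b, r⟩⟩
  · simp at hn
  · simp at hn
  · simp only [List.getElem_cons_zero, List.getElem_cons_succ] at hd0
    obtain ⟨h1, h2⟩ := hd0
    subst a
    subst b
    -- counts
    have hcnt : (v :: w :: r).count v = 2 := by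
      rw [count_fst hcd v]
      exact hdout
    have hvw' : v ≠ w := fun h => hloop v (h ▸ hvw)
    have hcnt2 : r.count v = 1 := by
      rw [List.count_cons_self, List.count_cons_of_ne hvw'.symm] at hcnt
      omega
    have hvr : v ∈ r := List.count_pos_iff.mp (by omega)
    obtain ⟨r1, r2, rfl⟩ := List.append_of_mem hvr
    have hcnt3 : r1.count v = 0 ∧ r2.count v = 0 := by
      rw [List.count_append, List.count_cons_self] at hcnt2
      omega
    have hvr1 : v ∉ r1 := List.count_eq_zero.mp hcnt3.1
    have hvr2 : v ∉ r2 := List.count_eq_zero.mp hcnt3.2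
    -- last element is u
    have hlast : (v :: w :: (r1 ++ v :: r2)).getLast (by simp) = u :=
      (List.getLast_eq_getElem (by simp)).trans hdlast
    have huL : (v :: r2).getLast (by simp) = u := by
      have e : v :: w :: (r1 ++ v :: r2) = (v :: w :: r1) ++ (v :: r2) := by simp
      calc (v :: r2).getLast (by simp)
          = ((v :: w :: r1) ++ (v :: r2)).getLast (by simp) :=
            (getLast_append_of_ne _ _ (by simp)).symm
        _ = (v :: w :: (r1 ++ v :: r2)).getLast (by simp) :=
            getLast_congr (by simp) (by simp) e.symm
        _ = u := hlast
    rcases r2 with _ | ⟨b2, r2'⟩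
    · simp at huL
      exact hu huL.symm
    · rw [List.getLast_cons (by simp)] at huL
      have hu_r2 : u ∈ b2 :: r2' := huL ▸ List.getLast_mem (by simp)
      have hb2 : b2 ≠ v := fun h => hvr2 (h ▸ List.mem_cons_self)
      -- chains
      have hch : List.Chain' E (v :: w :: (r1 ++ v :: b2 :: r2')) := chain'_of_circuit hcd
      have hch1 : List.Chain' E (w :: r1) := hch.infix ⟨[v], v :: b2 :: r2', by simp⟩
      have hch2 : List.Chain' E (b2 :: r2') :=
        hch.infix ⟨v :: w :: r1 ++ [v], [], by simp⟩
      have hr_wb : (delNode E v).Reachable ⟨w, hw⟩ ⟨b2, hb2⟩ := by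
        rcases List.mem_cons.mp hu_r2 with h | h
        · exact h ▸ hr_uw.symm
        · exact hr_uw.symm.trans (chain_reach hloop v r2' b2 hch2 hb2
            (fun hm => hvr2 (List.mem_cons_of_mem _ hm)) u h hu).symm
      -- reach every vertex of the circuit from w
      have reachAll : ∀ (x : V) (hx : x ≠ v), x ∈ (v :: w :: (r1 ++ v :: b2 :: r2')) →
          (delNode E v).Reachable ⟨w, hw⟩ ⟨x, hx⟩ := by
        intro x hx hxd
        rcases List.mem_cons.mp hxd with rfl | hxd
        · exact absurd rfl hx
        rcases List.mem_cons.mp hxd with rfl | hxd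
        · exact SimpleGraph.Reachable.refl _
        rcases List.mem_append.mp hxd with h1 | h2
        · exact chain_reach hloop v r1 w hch1 hw hvr1 x h1 hx
        · rcases List.mem_cons.mp h2 with rfl | h2
          · exact absurd rfl hx
          rcases List.mem_cons.mp h2 with rfl | h2
          · exact hr_wb
          · exact hr_wb.trans (chain_reach hloop v r2' b2 hch2 hb2
              (fun hm => hvr2 (List.mem_cons_of_mem _ hm)) x h2 hx)
      -- every vertex other than v lies on the circuit
      have hmemd : ∀ x : V, x ≠ v → x ∈ (v :: w :: (r1 ++ v :: b2 :: r2')) := by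
        intro x hx
        have hxy : ∃ y, E x y ∨ E y x := by
          obtain ⟨p⟩ := hconn.preconnected x v
          cases p with
          | nil => exact absurd rfl hx
          | cons hadj _ => exact ⟨_, (show _ ∧ _ from hadj).2⟩
        obtain ⟨y, hE | hE⟩ := hxy
        · exact (mem_of_edge hcd hE).1
        · exact (mem_of_edge hcd hE).2
      have hconn' : (delNode E v).Connected := by
        rw [SimpleGraph.connected_iff]
        refine ⟨fun x y => ?_, ⟨⟨w, hw⟩⟩⟩
        exact (reachAll x.1 x.2 (hmemd x.1 x.2)).symm.trans
          (reachAll y.1 y.2 (hmemd y.1 y.2))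
      exact hcut hconn'
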